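/- For every n and all probability vectors P = (p_1,…,p_n) and Q = (q_1,…,q_n) with all q_i > 0, the power divergences of orders 2 and 3 satisfy D₃(P,Q) ≥ (2/3)·D₂(P,Q)·(D₂(P,Q) + 1). -/

import Mathlib

open Finset

/-- The power divergence of order 2 (the χ²-divergence). -/
noncomputable def D2 {n : ℕ} (P Q : Fin n → ℝ) : ℝ := (1/2) * ∑ i, (P i - Q i)^2 / Q i

/-- The power divergence of order 3. -/
noncomputable def D3 {n : ℕ} (P Q : Fin n → ℝ) : ℝ := (1/6) * ((∑ i, (P i)^3 / (Q i)^2) - 1)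

/-- The joint-range inequality between the power divergences of orders 2 and 3. -/
theorem D3_ge_of_D2 (n : ℕ) (P Q : Fin n → ℝ)
    (hP0 : ∀ i, 0 ≤ P i) (hQ0 : ∀ i, 0 < Q i)
    (hP1 : ∑ i, P i = 1) (hQ1 : ∑ i, Q i = 1) :
    D3 P Q ≥ (2/3) * D2 P Q * (D2 P Q + 1) := by
  set s : ℝ := ∑ i, (P i)^2 / Q i with hs
  have hsum2 : ∑ i, (P i - Q i)^2 / Q i = s - 1 := by
    have : ∀ i, (P i - Q i)^2 / Q i = (P i)^2 / Q i - 2 * P i + Q i := by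
      intro i
      have hq := (hQ0 i).ne'
      field_simp
      ring
    rw [Finset.sum_congr rfl fun i _ => this i]
    rw [Finset.sum_add_distrib, Finset.sum_sub_distrib, ← Finset.mul_sum, hP1, hQ1]
    ring
  -- Cauchy-Schwarz: s^2 ≤ (∑ P^3/Q^2) * (∑ P) = ∑ P^3/Q^2
  have hCS : s^2 ≤ ∑ i, (P i)^3 / (Q i)^2 := by
    have h := Finset.sum_mul_sq_le_sq_mul_sq Finset.univ
      (fun i => P i * Real.sqrt (P i) / Q i) (fun i => Real.sqrt (P i))
    have h1 : ∀ i : Fin n, (P i * Real.sqrt (P i) / Q i) * Real.sqrt (P i)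
        = (P i)^2 / Q i := by
      intro i
      have hsq : Real.sqrt (P i) * Real.sqrt (P i) = P i := Real.mul_self_sqrt (hP0 i)
      have hq := (hQ0 i).ne'
      field_simp
      rw [pow_two (Real.sqrt (P i)), hsq]
      ring
    have h2 : ∀ i : Fin n, (P i * Real.sqrt (P i) / Q i)^2 = (P i)^3 / (Q i)^2 := by
      intro i
      have hsq : Real.sqrt (P i) * Real.sqrt (P i) = P i := Real.mul_self_sqrt (hP0 i)
      rw [div_pow, mul_pow, pow_two (Real.sqrt (P i)), hsq]
      ring
    have h3 : ∀ i : Fin n, (Real.sqrt (P i))^2 = P i := fun i => Real.sq_sqrt (hP0 i)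
    simp only [Finset.sum_congr rfl fun i _ => h1 i,
      Finset.sum_congr rfl fun i _ => h2 i,
      Finset.sum_congr rfl fun i _ => h3 i, hP1, mul_one] at h
    exact h
  unfold D2 D3
  rw [hsum2]
  nlinarith [hCS]
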